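/- Let A = ℤ^m. The set SAT(A,1) of satisfiable one-variable equations over A has asymptotic density zero in the space of all one-variable equations A_X = ℤ × ℤ^m with respect to the sup-norm ball stratification; moreover ρ_r(SAT(A,1)) = O((ln r)/r) if m = 1 and ρ_r(SAT(A,1)) = O(1/r) if m ≥ 2. -/

import Mathlib

open Filter Finset

/-- A one-variable equation `x^γ a^α = 1` over `ℤ^m`, given by `(γ, α)`,
is satisfiable iff `γ ≠ 0` and `γ ∣ gcd(α)`, or `γ = 0` and `α = 0`. -/
def SatOne (m : ℕ) (e : ℤ × (Fin m → ℤ)) : Prop :=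
  (e.1 ≠ 0 ∧ e.1 ∣ Finset.univ.gcd e.2) ∨ (e.1 = 0 ∧ ∀ j, e.2 j = 0)

/-- Ball density at radius `r` of a set of one-variable equations over `ℤ^m`. -/
noncomputable def rhoOne (m : ℕ) (S : Set (ℤ × (Fin m → ℤ))) (r : ℕ) : ℝ :=
  (Nat.card {e : ℤ × (Fin m → ℤ) //
      (|e.1| ≤ (r : ℤ) ∧ ∀ i, |e.2 i| ≤ (r : ℤ)) ∧ e ∈ S} : ℝ) /
    (2 * r + 1) ^ (m + 1)

open Classical in
noncomputable def satBall (m r : ℕ) : Finset (ℤ × (Fin m → ℤ)) :=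
  ((Finset.Icc (-(r:ℤ)) r) ×ˢ Fintype.piFinset fun _ => Finset.Icc (-(r:ℤ)) r).filter
    (fun e => SatOne m e)

lemma rhoOne_eq (m r : ℕ) :
    rhoOne m (SatOne m) r = (satBall m r).card / (2 * r + 1) ^ (m + 1) := by
  classical
  unfold rhoOne
  congr 2
  rw [show #(satBall m r) = Nat.card (satBall m r) from (Nat.card_eq_finsetCard _).symm]
  exact Nat.card_congr (Equiv.subtypeEquivRight (fun e => by
    simp only [satBall, Finset.mem_filter, Finset.mem_product, Fintype.mem_piFinset,
      Finset.mem_Icc, ← abs_le]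
    show _ ↔ _ ∧ SatOne m e
    tauto))

lemma mulCount (r : ℕ) (γ : ℤ) (hγ : γ ≠ 0) :
    ((Finset.Icc (-(r:ℤ)) r).filter (fun a => γ ∣ a)).card ≤ 2 * (r / γ.natAbs) + 1 := by
  classical
  set q : ℕ := r / γ.natAbs with hq
  have hsub : ((Finset.Icc (-(r:ℤ)) r).filter (fun a => γ ∣ a)) ⊆
      (Finset.Icc (-(q:ℤ)) q).image (fun k => γ * k) := by
    intro a ha
    simp only [Finset.mem_filter, Finset.mem_Icc] at ha
    obtain ⟨⟨hal, har⟩, k, hk⟩ := ha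
    have hga : 0 < γ.natAbs := Int.natAbs_pos.mpr hγ
    have hk' : k.natAbs ≤ q := by
      rw [hq, Nat.le_div_iff_mul_le hga]
      have h1 : (γ * k).natAbs ≤ r := by omega
      have h2 : (γ * k).natAbs = k.natAbs * γ.natAbs := by
        rw [Int.natAbs_mul]; ring
      omega
    refine Finset.mem_image.mpr ⟨k, ?_, hk.symm⟩
    simp only [Finset.mem_Icc]
    omega
  calc _ ≤ (Finset.Icc (-(q:ℤ)) q).card := (Finset.card_le_card hsub).trans Finset.card_image_le
    _ = 2 * q + 1 := by
        rw [Int.card_Icc]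
        omega

lemma card_satBall (m r : ℕ) :
    (satBall m r).card ≤
      1 + ∑ γ ∈ (Finset.Icc (-(r:ℤ)) r).erase 0, (2 * (r / γ.natAbs) + 1) ^ m := by
  classical
  have hsub : satBall m r ⊆ insert ((0 : ℤ), (fun _ => 0 : Fin m → ℤ))
      (((Finset.Icc (-(r:ℤ)) r).erase 0).biUnion fun γ =>
        (Fintype.piFinset fun _ : Fin m =>
          (Finset.Icc (-(r:ℤ)) r).filter fun a => γ ∣ a).image (fun α => (γ, α))) := by
    intro e he
    simp only [satBall, Finset.mem_filter, Finset.mem_product, Fintype.mem_piFinset] at he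
    obtain ⟨⟨h1, h2⟩, hsat⟩ := he
    rcases hsat with ⟨hne, hdvd⟩ | ⟨h0, hz⟩
    · refine Finset.mem_insert_of_mem ?_
      refine Finset.mem_biUnion.mpr ⟨e.1, Finset.mem_erase.mpr ⟨hne, h1⟩, ?_⟩
      refine Finset.mem_image.mpr ⟨e.2, ?_, rfl⟩
      simp only [Fintype.mem_piFinset, Finset.mem_filter]
      exact fun i => ⟨h2 i, hdvd.trans (Finset.gcd_dvd (Finset.mem_univ i))⟩
    · have : e = ((0 : ℤ), (fun _ => 0 : Fin m → ℤ)) := by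
        ext
        · exact h0
        · exact hz _
      rw [this]
      exact Finset.mem_insert_self _ _
  calc (satBall m r).card ≤ _ := Finset.card_le_card hsub
    _ ≤ _ + 1 := Finset.card_insert_le _ _
    _ ≤ (∑ γ ∈ (Finset.Icc (-(r:ℤ)) r).erase 0,
          ((Fintype.piFinset fun _ : Fin m =>
            (Finset.Icc (-(r:ℤ)) r).filter fun a => γ ∣ a).image (fun α => ((γ : ℤ), α))).card)
        + 1 := by
        gcongr
        exact Finset.card_biUnion_le
    _ ≤ (∑ γ ∈ (Finset.Icc (-(r:ℤ)) r).erase 0, (2 * (r / γ.natAbs) + 1) ^ m) + 1 := by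
        gcongr with γ hγ
        refine Finset.card_image_le.trans ?_
        rw [Fintype.card_piFinset]
        calc ∏ _i : Fin m, ((Finset.Icc (-(r:ℤ)) r).filter fun a => γ ∣ a).card
            = ((Finset.Icc (-(r:ℤ)) r).filter fun a => γ ∣ a).card ^ m := by
              rw [Finset.prod_const, Finset.card_univ, Fintype.card_fin]
          _ ≤ (2 * (r / γ.natAbs) + 1) ^ m :=
              Nat.pow_le_pow_left (mulCount r γ (Finset.mem_erase.mp hγ).1) m
    _ = _ := by ring

lemma sum_erase_natAbs (r : ℕ) (f : ℕ → ℕ) :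
    ∑ γ ∈ (Finset.Icc (-(r:ℤ)) r).erase 0, f γ.natAbs
      = 2 * ∑ g ∈ Finset.Icc 1 r, f g := by
  classical
  have hset : (Finset.Icc (-(r:ℤ)) r).erase 0
      = Finset.Icc (-(r:ℤ)) (-1) ∪ Finset.Icc (1:ℤ) r := by
    ext x
    simp only [Finset.mem_erase, Finset.mem_Icc, Finset.mem_union]
    omega
  have hdisj : Disjoint (Finset.Icc (-(r:ℤ)) (-1)) (Finset.Icc (1:ℤ) r) := by
    rw [Finset.disjoint_left]
    intro x hx hx'
    simp only [Finset.mem_Icc] at hx hx'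
    omega
  rw [hset, Finset.sum_union hdisj]
  have hpos : ∑ γ ∈ Finset.Icc (1:ℤ) r, f γ.natAbs = ∑ g ∈ Finset.Icc 1 r, f g := by
    refine Finset.sum_nbij' (fun γ => γ.natAbs) (fun g => (g : ℤ)) ?_ ?_ ?_ ?_ ?_
    · intro a ha; simp only [Finset.mem_Icc] at *; omega
    · intro a ha; simp only [Finset.mem_Icc] at *; omega
    · intro a ha; simp only [Finset.mem_Icc] at ha; show ((a.natAbs : ℤ)) = a; omega
    · intro a ha; simp
    · intro a ha; rfl
  have hneg : ∑ γ ∈ Finset.Icc (-(r:ℤ)) (-1), f γ.natAbs = ∑ g ∈ Finset.Icc 1 r, f g := by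
    refine Finset.sum_nbij' (fun γ => γ.natAbs) (fun g => -(g : ℤ)) ?_ ?_ ?_ ?_ ?_
    · intro a ha; simp only [Finset.mem_Icc] at *; omega
    · intro a ha; simp only [Finset.mem_Icc] at *; omega
    · intro a ha; simp only [Finset.mem_Icc] at ha; show -((a.natAbs : ℤ)) = a; omega
    · intro a ha; simp
    · intro a ha; rfl
  rw [hpos, hneg]
  ring

lemma count_le_real (m r : ℕ) :
    ((satBall m r).card : ℝ) ≤ 1 + 2 * ∑ g ∈ Finset.Icc 1 r, (3 * r / g : ℝ) ^ m := by
  have h1 := (card_satBall m r).trans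
    (by rw [sum_erase_natAbs r (fun g => (2 * (r / g) + 1) ^ m)])
  calc ((satBall m r).card : ℝ)
      ≤ ((1 + 2 * ∑ g ∈ Finset.Icc 1 r, (2 * (r / g) + 1) ^ m : ℕ) : ℝ) := by exact_mod_cast h1
    _ = 1 + 2 * ∑ g ∈ Finset.Icc 1 r, ((2 * (r / g) + 1 : ℕ) : ℝ) ^ m := by push_cast; ring
    _ ≤ 1 + 2 * ∑ g ∈ Finset.Icc 1 r, (3 * r / g : ℝ) ^ m := by
        gcongr with g hg
        simp only [Finset.mem_Icc] at hg
        have hg0 : (0 : ℝ) < g := by exact_mod_cast hg.1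
        have h2 : ((r / g : ℕ) : ℝ) ≤ (r : ℝ) / g := Nat.cast_div_le
        have h3 : (1 : ℝ) ≤ (r : ℝ) / g := by
          rw [le_div_iff₀ hg0]
          simpa using (by exact_mod_cast hg.2 : (g : ℝ) ≤ r)
        push_cast
        rw [mul_div_assoc]
        nlinarith

lemma harmonic_bound (r : ℕ) : ∑ g ∈ Finset.Icc 1 r, ((g : ℝ))⁻¹ ≤ 1 + Real.log r := by
  have h := harmonic_le_one_add_log r
  have he : ((harmonic r : ℚ) : ℝ) = ∑ g ∈ Finset.Icc 1 r, ((g : ℝ))⁻¹ := by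
    rw [harmonic_eq_sum_Icc]
    push_cast
    rfl
  linarith [he ▸ h]

lemma basel_bound (r : ℕ) : ∑ g ∈ Finset.Icc 1 r, (((g : ℝ))⁻¹) ^ 2 ≤ 2 := by
  have h := sum_Ioo_inv_sq_le (α := ℝ) 0 (r + 1)
  have he : Finset.Icc 1 r = Finset.Ioo 0 (r + 1) := by
    ext x; simp only [Finset.mem_Icc, Finset.mem_Ioo]; omega
  rw [he]
  calc ∑ g ∈ Finset.Ioo 0 (r+1), (((g : ℝ))⁻¹) ^ 2
      = ∑ g ∈ Finset.Ioo 0 (r+1), (((g : ℝ)) ^ 2)⁻¹ := by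
        refine Finset.sum_congr rfl fun g _ => ?_
        rw [inv_pow]
    _ ≤ 2 / ((0:ℕ) + 1) := h
    _ = 2 := by norm_num

lemma rho_nonneg (m r : ℕ) : 0 ≤ rhoOne m (SatOne m) r := by
  unfold rhoOne; positivity

lemma rho_le_one (r : ℕ) (hr : 3 ≤ r) :
    rhoOne 1 (SatOne 1) r ≤ (13 / 4) * (Real.log r / r) := by
  have hr0 : (0 : ℝ) < r := by
    have : (3 : ℝ) ≤ r := by exact_mod_cast hr
    linarith
  have hr3 : (3 : ℝ) ≤ r := by exact_mod_cast hr
  have hlog : (1 : ℝ) ≤ Real.log r := by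
    have hexp : Real.exp 1 ≤ r := by
      have := Real.exp_one_lt_d9
      linarith
    calc (1 : ℝ) = Real.log (Real.exp 1) := (Real.log_exp 1).symm
      _ ≤ Real.log r := Real.log_le_log (Real.exp_pos 1) hexp
  have hc : ((satBall 1 r).card : ℝ) ≤ 13 * r * Real.log r := by
    have h := count_le_real 1 r
    have hs : ∑ g ∈ Finset.Icc 1 r, (3 * r / g : ℝ) ^ 1 ≤ 3 * r * (1 + Real.log r) := by
      simp only [pow_one]
      calc ∑ g ∈ Finset.Icc 1 r, (3 * r / g : ℝ)
          = 3 * r * ∑ g ∈ Finset.Icc 1 r, ((g : ℝ))⁻¹ := by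
            rw [Finset.mul_sum]
            exact Finset.sum_congr rfl fun g _ => by rw [div_eq_mul_inv]
        _ ≤ 3 * r * (1 + Real.log r) := by
            have hb := harmonic_bound r
            nlinarith
    nlinarith
  rw [rhoOne_eq, div_le_iff₀ (by positivity)]
  have hsq : (4 : ℝ) * r ^ 2 ≤ (2 * r + 1) ^ (1 + 1) := by
    have he : ((2:ℝ) * r + 1) ^ (1 + 1) = (2 * r + 1) * (2 * r + 1) := by ring
    nlinarith
  have hlr : 0 ≤ Real.log r / r := by positivity
  calc ((satBall 1 r).card : ℝ) ≤ 13 * r * Real.log r := hc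
    _ = 13 / 4 * (Real.log r / r) * (4 * r ^ 2) := by field_simp
    _ ≤ 13 / 4 * (Real.log r / r) * (2 * r + 1) ^ (1 + 1) := by
        apply mul_le_mul_of_nonneg_left hsq (by positivity)

lemma rho_le_big (m r : ℕ) (hm : 2 ≤ m) (hr : 1 ≤ r) :
    rhoOne m (SatOne m) r ≤ (5 * 3 ^ m / 2 ^ (m + 1)) * (1 / r) := by
  have hr1 : (1 : ℝ) ≤ r := by exact_mod_cast hr
  have hr0 : (0 : ℝ) < r := by linarith
  have hc : ((satBall m r).card : ℝ) ≤ 5 * (3 * r) ^ m := by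
    have h := count_le_real m r
    have hs : ∑ g ∈ Finset.Icc 1 r, (3 * r / g : ℝ) ^ m ≤ (3 * r) ^ m * 2 := by
      calc ∑ g ∈ Finset.Icc 1 r, (3 * r / g : ℝ) ^ m
          ≤ ∑ g ∈ Finset.Icc 1 r, (3 * r : ℝ) ^ m * (((g : ℝ))⁻¹) ^ 2 := by
            refine Finset.sum_le_sum fun g hg => ?_
            simp only [Finset.mem_Icc] at hg
            have hg1 : (1 : ℝ) ≤ g := by exact_mod_cast hg.1
            rw [div_eq_mul_inv, mul_pow]
            refine mul_le_mul_of_nonneg_left ?_ (by positivity)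
            exact pow_le_pow_of_le_one (by positivity) (inv_le_one_of_one_le₀ hg1) hm
        _ = (3 * r : ℝ) ^ m * ∑ g ∈ Finset.Icc 1 r, (((g : ℝ))⁻¹) ^ 2 := by
            rw [Finset.mul_sum]
        _ ≤ (3 * r) ^ m * 2 := by
            refine mul_le_mul_of_nonneg_left (basel_bound r) (by positivity)
    have hone : (1 : ℝ) ≤ (3 * r) ^ m := one_le_pow₀ (by linarith)
    nlinarith
  rw [rhoOne_eq, div_le_iff₀ (by positivity)]
  have hpow : (2 * (r : ℝ)) ^ (m + 1) ≤ (2 * r + 1) ^ (m + 1) :=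
    pow_le_pow_left₀ (by positivity) (by linarith) _
  calc ((satBall m r).card : ℝ) ≤ 5 * (3 * r) ^ m := hc
    _ = (5 * 3 ^ m / 2 ^ (m + 1)) * (1 / r) * (2 * r) ^ (m + 1) := by
        field_simp
        ring
    _ ≤ (5 * 3 ^ m / 2 ^ (m + 1)) * (1 / r) * (2 * r + 1) ^ (m + 1) := by
        apply mul_le_mul_of_nonneg_left hpow (by positivity)

/-- `SAT(ℤ^m, 1)` is negligible; moreover its density is
`O(ln r / r)` for `m = 1` and `O(1/r)` for `m ≥ 2`. -/
theorem stmt8 (m : ℕ) (hm : 1 ≤ m) :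
    Tendsto (rhoOne m (SatOne m)) atTop (nhds 0) ∧
      (m = 1 → (fun r : ℕ => rhoOne m (SatOne m) r) =O[atTop]
        (fun r : ℕ => Real.log r / r)) ∧
      (2 ≤ m → (fun r : ℕ => rhoOne m (SatOne m) r) =O[atTop]
        (fun r : ℕ => 1 / (r : ℝ))) := by
  have hbig1 : m = 1 → (fun r : ℕ => rhoOne m (SatOne m) r) =O[atTop]
      (fun r : ℕ => Real.log r / r) := by
    rintro rfl
    rw [Asymptotics.isBigO_iff]
    refine ⟨13 / 4, ?_⟩
    filter_upwards [eventually_ge_atTop 3] with r hr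
    rw [Real.norm_eq_abs, Real.norm_eq_abs, abs_of_nonneg (rho_nonneg 1 r)]
    refine (rho_le_one r hr).trans ?_
    have := le_abs_self (Real.log r / r)
    nlinarith
  have hbig2 : 2 ≤ m → (fun r : ℕ => rhoOne m (SatOne m) r) =O[atTop]
      (fun r : ℕ => 1 / (r : ℝ)) := by
    intro hm2
    rw [Asymptotics.isBigO_iff]
    refine ⟨5 * 3 ^ m / 2 ^ (m + 1), ?_⟩
    filter_upwards [eventually_ge_atTop 1] with r hr
    rw [Real.norm_eq_abs, Real.norm_eq_abs, abs_of_nonneg (rho_nonneg m r)]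
    refine (rho_le_big m r hm2 hr).trans ?_
    have h1 := le_abs_self (1 / (r : ℝ))
    have h2 : (0 : ℝ) ≤ 5 * 3 ^ m / 2 ^ (m + 1) := by positivity
    nlinarith
  refine ⟨?_, hbig1, hbig2⟩
  rcases eq_or_lt_of_le hm with h1 | h2
  · have hlog0 : Tendsto (fun r : ℕ => Real.log r / r) atTop (nhds 0) := by
      have h := Real.isLittleO_log_id_atTop.tendsto_div_nhds_zero
      exact h.comp tendsto_natCast_atTop_atTop
    exact (hbig1 h1.symm).trans_tendsto hlog0
  · exact (hbig2 h2).trans_tendsto tendsto_one_div_atTop_nhds_zero_nat
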